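/- Suppose N ≥ 1, K = 1, and all N·M similarity values s_{i,j} are pairwise distinct. Then for every label l ∈ 𝒴, the number of possible worlds whose 1-NN prediction is l equals Σ_{i : y_i = l} Σ_{j=1}^M ∏_{n ∈ {1,…,N}, n ≠ i} α_{i,j}[n]. -/

import Mathlib

open Finset

/-- The similarity tally `α_{i,j}[n]`: the number of candidates `m` of the `n`-th candidate
set whose similarity is at most `s i j`. -/
noncomputable def alpha {N M : ℕ} (s : Fin N → Fin M → ℝ) (i : Fin N) (j : Fin M)
    (n : Fin N) : ℕ :=
  (Finset.univ.filter fun m => s n m ≤ s i j).card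

/-- If `N ≥ 1`, `K = 1`, and all similarities are pairwise distinct, then
for every label `l`, the number of possible worlds whose 1-NN prediction is `l` (i.e. whose
unique similarity-maximizing index has label `l`) equals
`Σ_{i : y i = l} Σ_j ∏_{n ≠ i} α_{i,j}[n]`. -/
theorem stmt6 (N M : ℕ) (hN : 1 ≤ N)
    {Y : Type*} [DecidableEq Y] (y : Fin N → Y)
    (s : Fin N → Fin M → ℝ)
    (hs : Function.Injective fun p : Fin N × Fin M => s p.1 p.2)
    (l : Y) :
    (Finset.univ.filter fun w : Fin N → Fin M =>
        ∃ i : Fin N, y i = l ∧ ∀ i' : Fin N, i' ≠ i → s i' (w i') < s i (w i)).card =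
      ∑ i ∈ Finset.univ.filter (fun i : Fin N => y i = l), ∑ j : Fin M,
        ∏ n ∈ Finset.univ.erase i, alpha s i j n := by
  classical
  have key : ∀ (i : Fin N) (j : Fin M),
      (Finset.univ.filter fun w : Fin N → Fin M =>
        w i = j ∧ ∀ n : Fin N, n ≠ i → s n (w n) < s i j).card
      = ∏ n ∈ Finset.univ.erase i, alpha s i j n := by
    intro i j
    have hpi : (Finset.univ.filter fun w : Fin N → Fin M =>
        w i = j ∧ ∀ n : Fin N, n ≠ i → s n (w n) < s i j)
      = Fintype.piFinset (fun n => if n = i then {j}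
          else Finset.univ.filter (fun m => s n m < s i j)) := by
      ext w
      simp only [Fintype.mem_piFinset, mem_filter, mem_univ, true_and]
      constructor
      · rintro ⟨h1, h2⟩ n
        by_cases hn : n = i
        · subst hn; simp [h1]
        · simp [hn, h2 n hn]
      · intro h
        refine ⟨by simpa using h i, fun n hn => by simpa [hn] using h n⟩
    have hmpe := Finset.mul_prod_erase (Finset.univ : Finset (Fin N))
        (fun n => ((if n = i then ({j} : Finset (Fin M))
          else Finset.univ.filter fun m => s n m < s i j)).card) (Finset.mem_univ i)
    rw [hpi, Fintype.card_piFinset, ← hmpe]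
    simp only [eq_self_iff_true, if_true, Finset.card_singleton, one_mul]
    apply Finset.prod_congr rfl
    intro n hn
    have hni : n ≠ i := (Finset.mem_erase.mp hn).1
    rw [if_neg hni]
    unfold alpha
    refine congrArg Finset.card (Finset.filter_congr fun m _ => ?_)
    have hne : s n m ≠ s i j := fun h => hni (congrArg Prod.fst (hs (a₁ := (n, m)) (a₂ := (i, j)) h))
    constructor
    · exact le_of_lt
    · exact fun h => lt_of_le_of_ne h hne
  have hset : (Finset.univ.filter fun w : Fin N → Fin M =>
        ∃ i : Fin N, y i = l ∧ ∀ i' : Fin N, i' ≠ i → s i' (w i') < s i (w i))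
      = ((Finset.univ.filter fun i : Fin N => y i = l) ×ˢ Finset.univ).biUnion
          (fun p => Finset.univ.filter fun w : Fin N → Fin M =>
            w p.1 = p.2 ∧ ∀ n : Fin N, n ≠ p.1 → s n (w n) < s p.1 p.2) := by
    ext w
    simp only [mem_biUnion, mem_filter, mem_univ, true_and, mem_product, Prod.exists]
    constructor
    · rintro ⟨i, hy, hmax⟩
      exact ⟨i, w i, ⟨hy, trivial⟩, rfl, hmax⟩
    · rintro ⟨i, j, ⟨hy, -⟩, hj, hmax⟩
      exact ⟨i, hy, fun n hn => hj ▸ hmax n hn⟩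
  rw [hset, Finset.card_biUnion, Finset.sum_product]
  · exact Finset.sum_congr rfl fun i _ => Finset.sum_congr rfl fun j _ => key i j
  · rintro ⟨i, j⟩ _ ⟨i', j'⟩ _ hne
    rw [Function.onFun, Finset.disjoint_left]
    rintro w hw hw'
    obtain ⟨-, hj, hm⟩ := Finset.mem_filter.mp hw
    obtain ⟨-, hj', hm'⟩ := Finset.mem_filter.mp hw'
    dsimp only at hj hm hj' hm'
    by_cases h : i = i'
    · subst h
      exact hne (Prod.ext rfl (hj.symm.trans hj'))
    · have h1 := hm i' (Ne.symm h)
      have h2 := hm' i h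
      rw [← hj] at h1
      rw [← hj'] at h2
      exact lt_asymm h1 h2
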